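/- Let κ > 0 be a real number and for t > 0 set α(t) = ∫₀^{κ√t} e^{-r²/2} dr. Then for every t > 0: ∫₀^∞ e^{-r²/(2t)} r³ sinh(κr) dr = √(π/2) κ t^{5/2}(κ²t + 3) e^{κ²t/2}, and ∫₀^∞ e^{-r²/(2t)} r³ cosh(κr) dr = t²(κ²t + 2) + κ t^{5/2}(κ²t + 3) e^{κ²t/2} α(t). -/

import Mathlib

open Real MeasureTheory
open Filter Set Topology

noncomputable def gaussA (t x : ℝ) : ℝ := ∫ s in (0:ℝ)..x, Real.exp (-(1/(2*t)) * s ^ 2)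

lemma contG (t : ℝ) : Continuous fun s : ℝ => Real.exp (-(1/(2*t)) * s ^ 2) := by
  fun_prop

lemma hasDerivAt_gaussA (t x : ℝ) :
    HasDerivAt (gaussA t) (Real.exp (-(1/(2*t)) * x ^ 2)) x := by
  refine intervalIntegral.integral_hasDerivAt_right ((contG t).intervalIntegrable _ _)
    ((contG t).stronglyMeasurable.stronglyMeasurableAtFilter) (contG t).continuousAt

lemma tendsto_gaussA {t : ℝ} (ht : 0 < t) :
    Tendsto (gaussA t) atTop (𝓝 (Real.sqrt (π/(1/(2*t)))/2)) := by
  have hb : (0:ℝ) < 1/(2*t) := by positivity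
  have hint : IntegrableOn (fun s : ℝ => Real.exp (-(1/(2*t)) * s ^ 2)) (Ioi 0) :=
    (integrable_exp_neg_mul_sq hb).integrableOn
  have := intervalIntegral_tendsto_integral_Ioi 0 hint tendsto_id
  rwa [integral_gaussian_Ioi] at this

lemma gaussA_neg (t x : ℝ) : gaussA t (-x) = - gaussA t x := by
  unfold gaussA
  have : (∫ s in (0:ℝ)..(-x), Real.exp (-(1/(2*t)) * s ^ 2)) =
      ∫ s in (0:ℝ)..(-x), Real.exp (-(1/(2*t)) * (-s) ^ 2) := by simp
  rw [this,
    intervalIntegral.integral_comp_neg (fun s => Real.exp (-(1/(2*t)) * s ^ 2)),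
    neg_neg, neg_zero, intervalIntegral.integral_symm]

lemma gaussA_scale {t : ℝ} (ht : 0 < t) (κ : ℝ) :
    gaussA t (κ*t) = Real.sqrt t * ∫ r in (0:ℝ)..(κ*Real.sqrt t), Real.exp (-r^2/2) := by
  have hs : Real.sqrt t ≠ 0 := by positivity
  have h := intervalIntegral.integral_comp_mul_right (a := 0) (b := κ*Real.sqrt t)
      (fun s => Real.exp (-(1/(2*t)) * s ^ 2)) hs
  rw [zero_mul, show κ*Real.sqrt t*Real.sqrt t = κ*t from by
      rw [mul_assoc, Real.mul_self_sqrt ht.le], smul_eq_mul] at h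
  have hL : (∫ x in (0:ℝ)..(κ*Real.sqrt t), Real.exp (-(1/(2*t)) * (x * Real.sqrt t) ^ 2))
      = ∫ r in (0:ℝ)..(κ*Real.sqrt t), Real.exp (-r^2/2) := by
    refine intervalIntegral.integral_congr fun x hx => ?_
    show Real.exp (-(1/(2*t)) * (x * Real.sqrt t) ^ 2) = Real.exp (-x^2/2)
    congr 1
    rw [mul_pow, Real.sq_sqrt ht.le]
    field_simp
  beta_reduce at h
  rw [hL] at h
  have h0 : gaussA t (κ*t) = ∫ x in (0:ℝ)..(κ*t), Real.exp (-(1/(2*t)) * x ^ 2) := rfl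
  rw [h0, h]
  field_simp

noncomputable def HH (κ t r : ℝ) : ℝ :=
  -t*(r^2 + κ*t*r + κ^2*t^2 + 2*t) * Real.exp (-(1/(2*t)) * r^2 + κ*r)
  + κ*t^2*(3+κ^2*t) * Real.exp (κ^2*t/2) * gaussA t (r - κ*t)

lemma exp_shift {t : ℝ} (ht : 0 < t) (κ r : ℝ) :
    Real.exp (κ^2*t/2) * Real.exp (-(1/(2*t)) * (r - κ*t) ^ 2) =
      Real.exp (-(1/(2*t)) * r^2 + κ*r) := by
  rw [← Real.exp_add]
  congr 1
  field_simp
  ring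

lemma hasDerivAt_HH (κ : ℝ) {t : ℝ} (ht : 0 < t) (r : ℝ) :
    HasDerivAt (HH κ t) (r^3 * Real.exp (-(1/(2*t)) * r^2 + κ*r)) r := by
  have h1 : HasDerivAt (fun r : ℝ => -(1/(2*t)) * r^2 + κ*r)
      (-(1/(2*t)) * (2*r) + κ) r := by
    have := ((hasDerivAt_pow 2 r).const_mul (-(1/(2*t)))).add
      ((hasDerivAt_id r).const_mul κ)
    exact this.congr_deriv (by norm_num)
  have hexp := h1.exp
  have hpoly : HasDerivAt (fun r : ℝ => -t*(r^2 + κ*t*r + κ^2*t^2 + 2*t))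
      (-t*(2*r + κ*t)) r := by
    have h := (((hasDerivAt_pow 2 r).add ((hasDerivAt_id r).const_mul (κ*t))).add_const
      (κ^2*t^2 + 2*t)).const_mul (-t)
    have heq : (fun y : ℝ => -t*(y^2 + κ*t*y + κ^2*t^2 + 2*t)) =
        (fun y : ℝ => -t * ((y^2 + κ*t*y) + (κ^2*t^2+2*t))) := by funext y; ring
    have hd : -t*(2*r + κ*t) = -t * (((2:ℕ):ℝ)*r^(2-1) + κ*t*1) := by push_cast; ring
    rw [heq, hd]
    simpa using h
  have hA : HasDerivAt (fun r : ℝ => gaussA t (r - κ*t))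
      (Real.exp (-(1/(2*t)) * (r - κ*t) ^ 2)) r := by
    have := (hasDerivAt_gaussA t (r - κ*t)).comp r ((hasDerivAt_id r).sub_const (κ*t))
    exact this.congr_deriv (by simp)
  have h := (hpoly.mul hexp).add ((hA.const_mul (κ*t^2*(3+κ^2*t) * Real.exp (κ^2*t/2))))
  refine h.congr_deriv ?_
  rw [show κ*t^2*(3+κ^2*t) * Real.exp (κ^2*t/2) * Real.exp (-(1/(2*t)) * (r - κ*t)^2)
      = κ*t^2*(3+κ^2*t) * Real.exp (-(1/(2*t)) * r^2 + κ*r) from by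
    rw [mul_assoc, exp_shift ht]]
  have htne : t ≠ 0 := ne_of_gt ht
  field_simp
  ring

lemma mono_decay {t : ℝ} (ht : 0 < t) (n : ℕ) :
    Tendsto (fun s : ℝ => s ^ n * Real.exp (-(1/(2*t)) * s ^ 2)) atTop (𝓝 0) := by
  have hb : (0:ℝ) < 1/(2*t) := by positivity
  have h := (rpow_mul_exp_neg_mul_sq_isLittleO_exp_neg hb (n : ℝ)).trans_tendsto ?_
  · refine h.congr' ?_
    filter_upwards [eventually_gt_atTop (0:ℝ)] with s hs
    rw [Real.rpow_natCast]
  · have : Tendsto (fun x : ℝ => -(1/2) * x) atTop atBot := by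
      apply Tendsto.const_mul_atTop_of_neg (by norm_num : -(1/2:ℝ) < 0) tendsto_id
    exact Real.tendsto_exp_atBot.comp this

lemma poly_decay {t : ℝ} (ht : 0 < t) (a b c : ℝ) :
    Tendsto (fun s : ℝ => (a*s^2 + b*s + c) * Real.exp (-(1/(2*t)) * s ^ 2)) atTop (𝓝 0) := by
  have h2 := (mono_decay ht 2).const_mul a
  have h1 := (mono_decay ht 1).const_mul b
  have h0 := (mono_decay ht 0).const_mul c
  have := (h2.add (h1.add h0))
  simp only [mul_zero, add_zero] at this
  refine this.congr (fun s => ?_)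
  simp only [pow_one, pow_zero, one_mul]
  ring

lemma tendsto_HH (κ : ℝ) {t : ℝ} (ht : 0 < t) :
    Tendsto (HH κ t) atTop
      (𝓝 (κ*t^2*(3+κ^2*t) * Real.exp (κ^2*t/2) * (Real.sqrt (π/(1/(2*t)))/2))) := by
  have hshift : Tendsto (fun r : ℝ => r - κ*t) atTop atTop :=
    tendsto_atTop_add_const_right atTop (-(κ*t)) tendsto_id |>.congr
      (fun r => by simp only [id_eq]; ring)
  have hterm1 : Tendsto (fun r : ℝ =>
      -t*(r^2 + κ*t*r + κ^2*t^2 + 2*t) * Real.exp (-(1/(2*t)) * r^2 + κ*r)) atTop (𝓝 0) := by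
    have hin := ((poly_decay ht (-t) (-t*(3*κ*t)) (-t*(3*κ^2*t^2 + 2*t))).comp hshift).const_mul
      (Real.exp (κ^2*t/2))
    rw [mul_zero] at hin
    refine hin.congr (fun r => ?_)
    simp only [Function.comp_apply]
    rw [show Real.exp (κ^2*t/2) * ((-t*(r - κ*t)^2 + -t*(3*κ*t)*(r-κ*t) + -t*(3*κ^2*t^2+2*t)) * Real.exp (-(1/(2*t)) * (r-κ*t)^2)) = (-t*(r - κ*t)^2 + -t*(3*κ*t)*(r-κ*t) + -t*(3*κ^2*t^2+2*t)) * (Real.exp (κ^2*t/2) * Real.exp (-(1/(2*t)) * (r-κ*t)^2)) from by ring, exp_shift ht]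
    ring
  have hterm2 := ((tendsto_gaussA ht).comp hshift).const_mul
    (κ*t^2*(3+κ^2*t) * Real.exp (κ^2*t/2))
  have := hterm1.add hterm2
  rw [zero_add] at this
  exact this.congr (fun r => by simp [HH, Function.comp_apply])

/-- For `κ > 0` and `t > 0`, with `α(t) = ∫₀^{κ√t} e^{-r²/2} dr`,
`∫₀^∞ e^{-r²/(2t)} r³ sinh(κr) dr = √(π/2) κ t^{5/2}(κ²t+3)e^{κ²t/2}` and
`∫₀^∞ e^{-r²/(2t)} r³ cosh(κr) dr = t²(κ²t+2) + κ t^{5/2}(κ²t+3)e^{κ²t/2} α(t)`. -/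
theorem heat_integrals_order_three (κ : ℝ) (hκ : 0 < κ) (t : ℝ) (ht : 0 < t) :
    (∫ r in Set.Ioi (0 : ℝ), Real.exp (-r ^ 2 / (2 * t)) * r ^ 3 * Real.sinh (κ * r)) =
      Real.sqrt (π / 2) * κ * t ^ ((5 : ℝ) / 2) * (κ ^ 2 * t + 3) * Real.exp (κ ^ 2 * t / 2) ∧
    (∫ r in Set.Ioi (0 : ℝ), Real.exp (-r ^ 2 / (2 * t)) * r ^ 3 * Real.cosh (κ * r)) =
      t ^ 2 * (κ ^ 2 * t + 2) + κ * t ^ ((5 : ℝ) / 2) * (κ ^ 2 * t + 3) *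
        Real.exp (κ ^ 2 * t / 2) *
        (∫ r in (0 : ℝ)..(κ * Real.sqrt t), Real.exp (-r ^ 2 / 2)) := by
  have htne : t ≠ 0 := ne_of_gt ht
  -- square root algebra
  have hsq2 : (Real.sqrt (π/2))^2 = π/2 := Real.sq_sqrt (by positivity)
  have h2π : π/(1/(2*t)) = (2*Real.sqrt (π/2))^2 * t := by
    rw [mul_pow, hsq2]
    field_simp
  have hsqrt : Real.sqrt (π/(1/(2*t)))/2 = Real.sqrt (π/2) * Real.sqrt t := by
    rw [h2π, Real.sqrt_mul (sq_nonneg _), Real.sqrt_sq (by positivity)]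
    ring
  have ht52 : t ^ ((5:ℝ)/2) = t^2 * Real.sqrt t := by
    rw [Real.sqrt_eq_rpow, ← Real.rpow_natCast t 2, ← Real.rpow_add ht]
    norm_num
  -- rewriting exponents
  have hexp_eq : ∀ r : ℝ, Real.exp (-r^2/(2*t)) = Real.exp (-(1/(2*t)) * r^2) := by
    intro r; congr 1; ring
  constructor
  · -- sinh case
    have hderiv : ∀ r ∈ Ici (0:ℝ), HasDerivAt (fun r => (HH κ t r - HH (-κ) t r)/2)
        (Real.exp (-r^2/(2*t)) * r^3 * Real.sinh (κ*r)) r := by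
      intro r _
      have h := ((hasDerivAt_HH κ ht r).sub (hasDerivAt_HH (-κ) ht r)).div_const 2
      refine h.congr_deriv ?_
      rw [Real.sinh_eq, hexp_eq, Real.exp_add, Real.exp_add,
        show ((-κ:ℝ))*r = -(κ*r) from by ring]
      ring
    have hpos : ∀ r ∈ Ioi (0:ℝ), 0 ≤ Real.exp (-r^2/(2*t)) * r^3 * Real.sinh (κ*r) := by
      intro r hr
      have hr0 : (0:ℝ) < r := hr
      exact mul_nonneg (mul_nonneg (Real.exp_pos _).le (by positivity))
        (Real.sinh_nonneg_iff.2 (by positivity))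
    have hlim := ((tendsto_HH κ ht).sub (tendsto_HH (-κ) ht)).div_const 2
    have := integral_Ioi_of_hasDerivAt_of_nonneg' hderiv hpos hlim
    rw [this]
    have hF0 : (HH κ t 0 - HH (-κ) t 0)/2 = 0 := by
      simp [HH, zero_sub, gaussA_neg, neg_sq]
    rw [hF0, sub_zero, neg_sq, hsqrt, ht52]
    ring
  · -- cosh case
    have hderiv : ∀ r ∈ Ici (0:ℝ), HasDerivAt (fun r => (HH κ t r + HH (-κ) t r)/2)
        (Real.exp (-r^2/(2*t)) * r^3 * Real.cosh (κ*r)) r := by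
      intro r _
      have h := ((hasDerivAt_HH κ ht r).add (hasDerivAt_HH (-κ) ht r)).div_const 2
      refine h.congr_deriv ?_
      rw [Real.cosh_eq, hexp_eq, Real.exp_add, Real.exp_add,
        show ((-κ:ℝ))*r = -(κ*r) from by ring]
      ring
    have hpos : ∀ r ∈ Ioi (0:ℝ), 0 ≤ Real.exp (-r^2/(2*t)) * r^3 * Real.cosh (κ*r) := by
      intro r hr
      have hr0 : (0:ℝ) < r := hr
      exact mul_nonneg (mul_nonneg (Real.exp_pos _).le (by positivity))
        (Real.cosh_pos _).le
    have hlim := ((tendsto_HH κ ht).add (tendsto_HH (-κ) ht)).div_const 2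
    have := integral_Ioi_of_hasDerivAt_of_nonneg' hderiv hpos hlim
    rw [this]
    have hF0 : (HH κ t 0 + HH (-κ) t 0)/2
        = -t*(κ^2*t^2 + 2*t) - κ*t^2*(3+κ^2*t) * Real.exp (κ^2*t/2) * gaussA t (κ*t) := by
      simp [HH, zero_sub, gaussA_neg, neg_sq]
      ring
    rw [hF0, neg_sq, gaussA_scale ht κ, ht52]
    ring
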